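/- The Laplace transform of f(t) = (1/(2t√(2πt))) · exp(−1/(8t)) equals g(s) = exp(−√(s/2)) for all s > 0. -/

import Mathlib

open Real MeasureTheory Set

private lemma sqrt4 : Real.sqrt (4:ℝ) = 2 := by
  rw [show (4:ℝ) = 2^2 by norm_num, Real.sqrt_sq (by norm_num)]

private lemma sqrt22 : Real.sqrt 2 * Real.sqrt 2 = 2 := Real.mul_self_sqrt (by norm_num)

private lemma contE (s : ℝ) : ContinuousOn (fun t => Real.exp (-(s*t) - 1/(8*t))) (Ioi 0) := by
  apply Real.continuous_exp.comp_continuousOn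
  apply ContinuousOn.sub
  · exact ((continuous_const.mul continuous_id).neg).continuousOn
  · exact continuousOn_const.div ((continuous_const.mul continuous_id).continuousOn)
      (fun t ht => by have : (0:ℝ) < t := ht; positivity)

/-- Step A: substitution t ↦ 1/(8 s u). -/
private lemma stepA (s : ℝ) (hs : 0 < s) :
    ∫ t in Ioi (0:ℝ), Real.exp (-(s*t) - 1/(8*t)) / (t * Real.sqrt t)
      = (2 * Real.sqrt 2 * Real.sqrt s) * ∫ t in Ioi (0:ℝ), Real.exp (-(s*t) - 1/(8*t)) / Real.sqrt t := by
  have hderiv : ∀ u ∈ Ioi (0:ℝ), HasDerivWithinAt (fun u => 1/(8*s*u)) (-(1/(8*s*u^2))) (Ioi 0) u := by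
    intro u hu
    have hu0 : (0:ℝ) < u := hu
    have h := ((hasDerivAt_inv hu0.ne').const_mul (1/(8*s))).hasDerivWithinAt
      (s := Ioi (0:ℝ))
    have e1 : (fun u => 1/(8*s*u)) = fun y => 1 / (8 * s) * y⁻¹ := by ext v; ring
    have e2 : -(1/(8*s*u^2)) = 1/(8*s) * -(u^2)⁻¹ := by ring
    rw [e1, e2]; exact h
  have hinvol : ∀ u ∈ Ioi (0:ℝ), 1/(8*s*(1/(8*s*u))) = u := by
    intro u hu
    have hu0 : (0:ℝ) < u := hu
    field_simp
  have hinj : InjOn (fun u => 1/(8*s*u)) (Ioi 0) := by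
    intro a ha b hb hab
    rw [← hinvol a ha, ← hinvol b hb]
    simp only at hab
    rw [hab]
  have himg : (fun u => 1/(8*s*u)) '' (Ioi 0) = Ioi (0:ℝ) := by
    ext y
    constructor
    · rintro ⟨u, hu, rfl⟩
      have hu0 : (0:ℝ) < u := hu
      exact mem_Ioi.2 (by positivity)
    · intro hy
      have hy0 : (0:ℝ) < y := hy
      exact ⟨1/(8*s*y), mem_Ioi.2 (by positivity), hinvol y hy⟩
  have key := integral_image_eq_integral_abs_deriv_smul measurableSet_Ioi hderiv hinj
    (fun t => Real.exp (-(s*t) - 1/(8*t)) / (t * Real.sqrt t))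
  rw [himg] at key
  rw [key, ← integral_const_mul]
  apply setIntegral_congr_fun measurableSet_Ioi
  intro u hu
  have hu0 : (0:ℝ) < u := hu
  have hsu : Real.sqrt u ≠ 0 := by positivity
  have harg : -(s*(1/(8*s*u))) - 1/(8*(1/(8*s*u))) = -(s*u) - 1/(8*u) := by
    field_simp; ring
  have h8 : Real.sqrt (8*s*u) = 2 * Real.sqrt 2 * Real.sqrt s * Real.sqrt u := by
    rw [Real.sqrt_mul (by positivity), Real.sqrt_mul (by norm_num),
      show (8:ℝ) = 4*2 by norm_num, Real.sqrt_mul (by norm_num), sqrt4]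
  have husq : Real.sqrt u * Real.sqrt u = u := Real.mul_self_sqrt hu0.le
  simp only [smul_eq_mul, harg]
  rw [one_div (8*s*u), Real.sqrt_inv, ← one_div (8*s*u), h8]
  rw [abs_neg, abs_of_pos (by positivity)]
  field_simp
  linear_combination husq

/-- derivative of φ. -/
private lemma phiDeriv (s : ℝ) : ∀ t ∈ Ioi (0:ℝ),
    HasDerivWithinAt (fun t => Real.sqrt s * Real.sqrt t - Real.sqrt 2 / 4 / Real.sqrt t)
      (Real.sqrt s / (2 * Real.sqrt t) + Real.sqrt 2 / (8 * (t * Real.sqrt t))) (Ioi 0) t := by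
  intro t ht
  have ht0 : (0:ℝ) < t := ht
  have hst : Real.sqrt t ≠ 0 := by positivity
  have h1 : HasDerivAt Real.sqrt (1 / (2 * Real.sqrt t)) t := Real.hasDerivAt_sqrt ht0.ne'
  have h2 : HasDerivAt (fun t => Real.sqrt s * Real.sqrt t - Real.sqrt 2 / 4 / Real.sqrt t)
      (Real.sqrt s * (1 / (2 * Real.sqrt t)) - (-(1 / (2 * Real.sqrt t)) / (Real.sqrt t)^2 * (Real.sqrt 2 / 4))) t := by
    simpa [div_eq_mul_inv, mul_comm, Pi.sub_def] using (h1.const_mul (Real.sqrt s)).sub ((h1.inv hst).const_mul (Real.sqrt 2 / 4))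
  have heq : Real.sqrt s * (1 / (2 * Real.sqrt t)) - (-(1 / (2 * Real.sqrt t)) / (Real.sqrt t)^2 * (Real.sqrt 2 / 4))
      = Real.sqrt s / (2 * Real.sqrt t) + Real.sqrt 2 / (8 * (t * Real.sqrt t)) := by
    have h3 : Real.sqrt t ^ 2 = t := Real.sq_sqrt ht0.le
    field_simp
    ring_nf
    linear_combination (-8*Real.sqrt 2) * h3
  exact (heq ▸ h2).hasDerivWithinAt

private lemma phiInj (s : ℝ) (hs : 0 < s) :
    InjOn (fun t => Real.sqrt s * Real.sqrt t - Real.sqrt 2 / 4 / Real.sqrt t) (Ioi 0) := by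
  have hmono : StrictMonoOn (fun t => Real.sqrt s * Real.sqrt t - Real.sqrt 2 / 4 / Real.sqrt t) (Ioi 0) := by
    intro x hx y hy hxy
    have hx0 : (0:ℝ) < x := hx
    have hy0 : (0:ℝ) < y := hy
    have h1 : Real.sqrt x < Real.sqrt y := Real.sqrt_lt_sqrt hx0.le hxy
    have hsx : (0:ℝ) < Real.sqrt x := Real.sqrt_pos.2 hx0
    have hss : (0:ℝ) < Real.sqrt s := Real.sqrt_pos.2 hs
    have h2 : Real.sqrt s * Real.sqrt x < Real.sqrt s * Real.sqrt y :=
      mul_lt_mul_of_pos_left h1 hss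
    have h3 : Real.sqrt 2 / 4 / Real.sqrt y < Real.sqrt 2 / 4 / Real.sqrt x :=
      div_lt_div_of_pos_left (by positivity) hsx h1
    simp only
    linarith
  exact hmono.injOn

private lemma phiImg (s : ℝ) (hs : 0 < s) :
    (fun t => Real.sqrt s * Real.sqrt t - Real.sqrt 2 / 4 / Real.sqrt t) '' (Ioi 0) = univ := by
  have hss : (0:ℝ) < Real.sqrt s := Real.sqrt_pos.2 hs
  have hs2 : (0:ℝ) < Real.sqrt 2 := by positivity
  apply eq_univ_of_forall
  intro y
  set r : ℝ := y^2 + Real.sqrt 2 * Real.sqrt s with hr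
  have hrpos : 0 < r := by positivity
  have hrr : Real.sqrt r ^ 2 = y^2 + Real.sqrt 2 * Real.sqrt s := by
    rw [Real.sq_sqrt hrpos.le]
  have hry : |y| < Real.sqrt r := by
    rw [← Real.sqrt_sq_eq_abs]
    exact Real.sqrt_lt_sqrt (sq_nonneg y) (by nlinarith)
  have hx0 : 0 < (y + Real.sqrt r) / (2 * Real.sqrt s) := by
    have := abs_lt.1 hry
    apply div_pos (by linarith [this.1]) (by positivity)
  set x : ℝ := (y + Real.sqrt r) / (2 * Real.sqrt s) with hxdef
  refine ⟨x^2, mem_Ioi.2 (by positivity), ?_⟩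
  have hsq : Real.sqrt (x^2) = x := Real.sqrt_sq hx0.le
  simp only [hsq]
  have hx2 : 2 * Real.sqrt s * x = y + Real.sqrt r := by
    rw [hxdef]; field_simp
  have h4 : (2 * Real.sqrt s * x)^2 = (y + Real.sqrt r)^2 := by rw [hx2]
  have hgoal' : 4 * Real.sqrt s * (Real.sqrt s * x^2 - y*x - Real.sqrt 2/4) = 0 := by
    linear_combination h4 - 2*y*hx2 + hrr
  have hgoal : Real.sqrt s * x^2 - y*x - Real.sqrt 2/4 = 0 := by
    rcases mul_eq_zero.mp hgoal' with h | h
    · nlinarith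
    · exact h
  have hxne : x ≠ 0 := hx0.ne'
  clear_value x r
  field_simp
  linear_combination 4 * hgoal

private lemma stepB (s : ℝ) (hs : 0 < s) :
    Real.sqrt π = Real.exp (Real.sqrt (s/2)) *
      ((Real.sqrt s / 2) * (∫ t in Ioi (0:ℝ), Real.exp (-(s*t) - 1/(8*t)) / Real.sqrt t)
        + (Real.sqrt 2 / 8) * (∫ t in Ioi (0:ℝ), Real.exp (-(s*t) - 1/(8*t)) / (t * Real.sqrt t))) := by
  have hss : (0:ℝ) < Real.sqrt s := Real.sqrt_pos.2 hs
  have hgi : Integrable (fun x : ℝ => Real.exp (-x^2)) := by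
    simpa using integrable_exp_neg_mul_sq (one_pos (α := ℝ))
  have hg : (∫ x : ℝ, Real.exp (-x^2)) = Real.sqrt π := by
    simpa using integral_gaussian 1
  have key := integral_image_eq_integral_abs_deriv_smul measurableSet_Ioi (phiDeriv s)
    (phiInj s hs) (fun x => Real.exp (-x^2))
  rw [phiImg s hs, Measure.restrict_univ, hg] at key
  -- pointwise identity
  have hsd : Real.sqrt (s/2) = Real.sqrt 2 * Real.sqrt s / 2 := by
    rw [show s/2 = s * 2⁻¹ by ring, Real.sqrt_mul hs.le, Real.sqrt_inv]
    field_simp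
    linear_combination (-1) * sqrt22
  have hpt : EqOn
      (fun t => |Real.sqrt s / (2 * Real.sqrt t) + Real.sqrt 2 / (8 * (t * Real.sqrt t))| •
        Real.exp (-(Real.sqrt s * Real.sqrt t - Real.sqrt 2 / 4 / Real.sqrt t)^2))
      (fun t => Real.exp (Real.sqrt (s/2)) *
        ((Real.sqrt s / 2) * (Real.exp (-(s*t) - 1/(8*t)) / Real.sqrt t)
          + (Real.sqrt 2 / 8) * (Real.exp (-(s*t) - 1/(8*t)) / (t * Real.sqrt t)))) (Ioi 0) := by
    intro t ht
    have ht0 : (0:ℝ) < t := ht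
    have hstp : (0:ℝ) < Real.sqrt t := Real.sqrt_pos.2 ht0
    have husq : Real.sqrt t * Real.sqrt t = t := Real.mul_self_sqrt ht0.le
    have hssq : Real.sqrt s * Real.sqrt s = s := Real.mul_self_sqrt hs.le
    have hsq : (Real.sqrt s * Real.sqrt t - Real.sqrt 2 / 4 / Real.sqrt t)^2
        = s*t + 1/(8*t) - Real.sqrt (s/2) := by
      rw [hsd]
      field_simp
      linear_combination ((256)*Real.sqrt s*Real.sqrt s*Real.sqrt t*Real.sqrt t*t + (-32) + (-256)*s*t*t + (256)*Real.sqrt s*Real.sqrt s*t*t) * husq + ((256)*t*t*t) * hssq + ((16)*t) * sqrt22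
    have hexp : Real.exp (-(Real.sqrt s * Real.sqrt t - Real.sqrt 2 / 4 / Real.sqrt t)^2)
        = Real.exp (Real.sqrt (s/2)) * Real.exp (-(s*t) - 1/(8*t)) := by
      rw [← Real.exp_add, hsq]; ring_nf
    simp only [smul_eq_mul, hexp, abs_of_pos (show (0:ℝ) <
      Real.sqrt s / (2 * Real.sqrt t) + Real.sqrt 2 / (8 * (t * Real.sqrt t)) by positivity)]
    field_simp
  rw [setIntegral_congr_fun measurableSet_Ioi hpt] at key
  -- integrability
  have hcomb : IntegrableOn
      (fun t => Real.exp (Real.sqrt (s/2)) *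
        ((Real.sqrt s / 2) * (Real.exp (-(s*t) - 1/(8*t)) / Real.sqrt t)
          + (Real.sqrt 2 / 8) * (Real.exp (-(s*t) - 1/(8*t)) / (t * Real.sqrt t)))) (Ioi (0:ℝ)) := by
    have := (integrableOn_image_iff_integrableOn_abs_deriv_smul measurableSet_Ioi (phiDeriv s)
      (phiInj s hs) (fun x => Real.exp (-x^2))).mp (by rw [phiImg s hs]; exact hgi.integrableOn)
    exact this.congr_fun hpt measurableSet_Ioi
  have hmeas2 : AEStronglyMeasurable (fun t => (Real.sqrt s / 2) * (Real.exp (-(s*t) - 1/(8*t)) / Real.sqrt t))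
      (volume.restrict (Ioi (0:ℝ))) := by
    refine ContinuousOn.aestronglyMeasurable ?_ measurableSet_Ioi
    exact continuousOn_const.mul ((contE s).div Real.continuous_sqrt.continuousOn
      (fun t ht => by have : (0:ℝ) < t := ht; positivity))
  have hmeas1 : AEStronglyMeasurable (fun t => (Real.sqrt 2 / 8) * (Real.exp (-(s*t) - 1/(8*t)) / (t * Real.sqrt t)))
      (volume.restrict (Ioi (0:ℝ))) := by
    refine ContinuousOn.aestronglyMeasurable ?_ measurableSet_Ioi
    exact continuousOn_const.mul ((contE s).div
      (continuous_id.continuousOn.mul Real.continuous_sqrt.continuousOn)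
      (fun t ht => by have : (0:ℝ) < t := ht; positivity))
  have hbound : ∀ t ∈ Ioi (0:ℝ),
      (0:ℝ) ≤ (Real.sqrt s / 2) * (Real.exp (-(s*t) - 1/(8*t)) / Real.sqrt t) ∧
      (0:ℝ) ≤ (Real.sqrt 2 / 8) * (Real.exp (-(s*t) - 1/(8*t)) / (t * Real.sqrt t)) := by
    intro t ht
    have ht0 : (0:ℝ) < t := ht
    constructor <;> positivity
  have hone : (1:ℝ) ≤ Real.exp (Real.sqrt (s/2)) := by
    rw [show (1:ℝ) = Real.exp 0 by simp]
    exact Real.exp_le_exp.2 (Real.sqrt_nonneg _)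
  have hi2 : IntegrableOn (fun t => (Real.sqrt s / 2) * (Real.exp (-(s*t) - 1/(8*t)) / Real.sqrt t)) (Ioi (0:ℝ)) := by
    refine hcomb.mono' hmeas2 ?_
    rw [ae_restrict_iff' measurableSet_Ioi]
    filter_upwards with t ht
    obtain ⟨h1, h2⟩ := hbound t ht
    rw [Real.norm_eq_abs, abs_of_nonneg h1]
    nlinarith [Real.exp_pos (Real.sqrt (s/2))]
  have hi1 : IntegrableOn (fun t => (Real.sqrt 2 / 8) * (Real.exp (-(s*t) - 1/(8*t)) / (t * Real.sqrt t))) (Ioi (0:ℝ)) := by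
    refine hcomb.mono' hmeas1 ?_
    rw [ae_restrict_iff' measurableSet_Ioi]
    filter_upwards with t ht
    obtain ⟨h1, h2⟩ := hbound t ht
    rw [Real.norm_eq_abs, abs_of_nonneg h2]
    nlinarith [Real.exp_pos (Real.sqrt (s/2))]
  rw [key, integral_const_mul, integral_add hi2 hi1, integral_const_mul, integral_const_mul]


theorem laplace_transform_example :
    ∀ s : ℝ, 0 < s →
      ∫ t in Set.Ioi (0:ℝ),
        Real.exp (-s * t) * (1 / (2 * t * Real.sqrt (2 * π * t)) * Real.exp (-1 / (8 * t)))
      = Real.exp (-Real.sqrt (s / 2)) := by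
  intro s hs
  have hss : (0:ℝ) < Real.sqrt s := Real.sqrt_pos.2 hs
  have hpp : (0:ℝ) < Real.sqrt π := Real.sqrt_pos.2 Real.pi_pos
  have h2p : (0:ℝ) < Real.sqrt 2 := by positivity
  have hA := stepA s hs
  have hB := stepB s hs
  have hT : (∫ t in Set.Ioi (0:ℝ),
        Real.exp (-s * t) * (1 / (2 * t * Real.sqrt (2 * π * t)) * Real.exp (-1 / (8 * t))))
      = (1/(2*Real.sqrt 2*Real.sqrt π)) *
        ∫ t in Ioi (0:ℝ), Real.exp (-(s*t) - 1/(8*t)) / (t * Real.sqrt t) := by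
    rw [← integral_const_mul]
    apply setIntegral_congr_fun measurableSet_Ioi
    intro t ht
    have ht0 : (0:ℝ) < t := ht
    have hstp : (0:ℝ) < Real.sqrt t := Real.sqrt_pos.2 ht0
    have hsqt : Real.sqrt (2*π*t) = Real.sqrt 2 * Real.sqrt π * Real.sqrt t := by
      rw [Real.sqrt_mul (by positivity) t, Real.sqrt_mul (by norm_num) π]
    simp only [hsqt]
    rw [show Real.exp (-s*t) * (1/(2*t*(Real.sqrt 2*Real.sqrt π*Real.sqrt t)) * Real.exp (-1/(8*t)))
        = (Real.exp (-s*t) * Real.exp (-1/(8*t))) * (1/(2*t*(Real.sqrt 2*Real.sqrt π*Real.sqrt t))) by ring,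
      ← Real.exp_add, show -s*t + -1/(8*t) = -(s*t) - 1/(8*t) by ring]
    field_simp
  rw [hT]
  have hsd2 : Real.sqrt (s/2) = Real.sqrt s / Real.sqrt 2 := Real.sqrt_div hs.le 2
  rw [hsd2] at hB ⊢
  set I₁ := ∫ t in Ioi (0:ℝ), Real.exp (-(s*t) - 1/(8*t)) / (t * Real.sqrt t) with hI1
  set I₂ := ∫ t in Ioi (0:ℝ), Real.exp (-(s*t) - 1/(8*t)) / Real.sqrt t with hI2
  clear_value I₁ I₂
  have hI2eq : I₂ = I₁/(2*Real.sqrt 2*Real.sqrt s) := by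
    rw [hA]; field_simp
  have hEpos : (0:ℝ) < Real.exp (Real.sqrt (s/2)) := Real.exp_pos _
  have hB2 : Real.sqrt π = Real.exp (Real.sqrt s / Real.sqrt 2) * (Real.sqrt 2/4) * I₁ := by
    rw [hB, hI2eq]
    field_simp
    linear_combination (-16*I₁) * sqrt22
  rw [Real.exp_neg]
  field_simp
  linear_combination (-2*Real.sqrt 2)*hB2 - (I₁ * Real.exp (Real.sqrt s / Real.sqrt 2) / 2) * sqrt22
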